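/- arXiv:2502.00807 — 3 statements merged into one kernel-verified Lean document; each statement's English description precedes it below -/
import Mathlib

section
/- Thermodynamic feasibility excludes internal cycles: if v ∈ ℝⁿ satisfies S v = 0, and there exist μ ∈ ℝᵐ and Δ = S_I^⊤ μ such that Δ_i v_i < 0 for every internal reaction i with v_i ≠ 0, then the restriction of v to the internal reactions cannot itself be a nonzero vector in null(S_I). More precisely, for any nonzero ℓ supported on internal reactions with S_I ℓ_I = 0 and sign(ℓ_i) = sign(v_i) whenever ℓ_i ≠ 0, one derives a contradiction; hence no internal cycle is sign-compatible with v. -/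
open Matrix


/-- Thermodynamic feasibility excludes sign-compatible internal cycles. -/
theorem thermo_feasible_no_sign_compatible_cycle
    {m p : ℕ} (SI : Matrix (Fin m) (Fin p) ℝ) (v : Fin p → ℝ)
    (μ : Fin m → ℝ) (Δ : Fin p → ℝ)
    (hΔ : Δ = SI.transpose.mulVec μ)
    (hfeas : ∀ i : Fin p, v i ≠ 0 → Δ i * v i < 0) :
    ¬ ∃ ℓ : Fin p → ℝ, ℓ ≠ 0 ∧ SI.mulVec ℓ = 0 ∧
      (∀ i : Fin p, ℓ i ≠ 0 → ℓ i * v i > 0) := by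
  rintro ⟨ℓ, hne, hker, hsign⟩
  -- ℓ ⬝ᵥ Δ = 0
  have hzero : ℓ ⬝ᵥ Δ = 0 := by
    rw [hΔ, Matrix.dotProduct_mulVec, Matrix.vecMul_transpose, hker,
      zero_dotProduct]
  -- each term ℓ i * Δ i ≤ 0
  have hle : ∀ i, ℓ i * Δ i ≤ 0 := by
    intro i
    by_cases h : ℓ i = 0
    · simp [h]
    · have h1 := hsign i h
      have hv : v i ≠ 0 := by
        intro hv; rw [hv, mul_zero] at h1; exact lt_irrefl _ h1
      have h2 := hfeas i hv
      nlinarith [sq_nonneg (v i)]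
  -- some term is strictly negative
  obtain ⟨i, hi⟩ := Function.ne_iff.mp hne
  have hlt : ℓ i * Δ i < 0 := by
    have h1 := hsign i hi
    have hv : v i ≠ 0 := by
      intro hv; rw [hv, mul_zero] at h1; exact lt_irrefl _ h1
    have h2 := hfeas i hv
    nlinarith [sq_nonneg (v i)]
  have : ℓ ⬝ᵥ Δ < 0 := by
    have := Finset.sum_lt_sum (f := fun j => ℓ j * Δ j) (g := fun _ => (0 : ℝ))
      (fun j _ => hle j) ⟨i, Finset.mem_univ i, hlt⟩
    simpa [dotProduct] using this
  linarith
end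

section
/- Correctness of the big-M reformulation: suppose M ≥ max_i max(|l_i|, |u_i|) holds for the flux bounds and M ≥ ε > 0. Then v (with l ≤ v ≤ u) admits μ, Δ = S_I^⊤ μ satisfying, for all i ∈ I, either (v_i ≥ 0 and Δ_i ≤ −ε) or (v_i ≤ 0 and Δ_i ≥ ε) with additionally |Δ_i| ≤ M, if and only if there exists a ∈ {0,1}^{|I|} such that for all i ∈ I: −M a_i + ε(1−a_i) ≤ Δ_i ≤ −ε a_i + M(1−a_i) and −M(1−a_i) ≤ v_i ≤ M a_i. -/
/-- Correctness of the big-M reformulation of the loopless disjunction. -/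
theorem bigM_reformulation_correct
    {m p : ℕ} (SI : Matrix (Fin m) (Fin p) ℝ) (v l u : Fin p → ℝ)
    (ε M : ℝ) (hε : 0 < ε) (hεM : ε ≤ M)
    (hM : ∀ i : Fin p, |l i| ≤ M ∧ |u i| ≤ M)
    (hlv : ∀ i, l i ≤ v i) (hvu : ∀ i, v i ≤ u i) :
    (∃ μ : Fin m → ℝ, ∀ i : Fin p,
        ((v i ≥ 0 ∧ SI.transpose.mulVec μ i ≤ -ε) ∨
         (v i ≤ 0 ∧ SI.transpose.mulVec μ i ≥ ε)) ∧
        |SI.transpose.mulVec μ i| ≤ M)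
    ↔
    (∃ (μ : Fin m → ℝ) (a : Fin p → ℝ), (∀ i, a i = 0 ∨ a i = 1) ∧
      ∀ i : Fin p,
        (-M * a i + ε * (1 - a i) ≤ SI.transpose.mulVec μ i ∧
         SI.transpose.mulVec μ i ≤ -ε * a i + M * (1 - a i)) ∧
        (-M * (1 - a i) ≤ v i ∧ v i ≤ M * a i)) := by
  have hvM : ∀ i, |v i| ≤ M := fun i => by
    have h1 := (hM i).1; have h2 := (hM i).2
    have := hlv i; have := hvu i
    rw [abs_le] at *
    constructor <;> linarith [h1.1, h2.2]
  constructor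
  · rintro ⟨μ, h⟩
    refine ⟨μ, fun i => if 0 ≤ v i ∧ SI.transpose.mulVec μ i ≤ -ε then 1 else 0,
      fun i => by dsimp only; split <;> simp, fun i => ?_⟩
    obtain ⟨hdisj, habs⟩ := h i
    have hv := hvM i
    rw [abs_le] at habs hv
    dsimp only
    split
    · next hc => constructor <;> constructor <;> nlinarith [hc.1, hc.2]
    · next hc =>
      have : v i ≤ 0 ∧ SI.transpose.mulVec μ i ≥ ε := by
        rcases hdisj with ⟨h1, h2⟩ | h2
        · exact absurd ⟨h1, h2⟩ hc
        · exact h2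
      constructor <;> constructor <;> nlinarith [this.1, this.2]
  · rintro ⟨μ, a, ha, h⟩
    refine ⟨μ, fun i => ?_⟩
    obtain ⟨⟨h1, h2⟩, h3, h4⟩ := h i
    rcases ha i with h0 | h0 <;> rw [h0] at h1 h2 h3 h4
    · refine ⟨Or.inr ⟨by linarith, by linarith⟩, abs_le.mpr ⟨by linarith, by linarith⟩⟩
    · refine ⟨Or.inl ⟨by linarith, by linarith⟩, abs_le.mpr ⟨by linarith, by linarith⟩⟩
end

section
/- Sign-compatibility criterion: for a direction assignment a ∈ {0,1}^{|I|}, the subproblem (∃ μ: (S_I^⊤ μ)_i ≤ −ε for a_i = 1, (S_I^⊤ μ)_i ≥ ε for a_i = 0) is infeasible if and only if there exists a nonzero ℓ ∈ null(S_I) with ℓ_i ≥ 0 for all i with a_i = 1 and ℓ_i ≤ 0 for all i with a_i = 0. -/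
open Finset in
/-- Sign-compatibility criterion: the subproblem for directions `a` is infeasible
iff there exists a sign-compatible nonzero internal cycle. -/
theorem subproblem_infeasible_iff_sign_compatible_cycle
    {m p : ℕ} (SI : Matrix (Fin m) (Fin p) ℝ) (ε : ℝ) (hε : 0 < ε)
    (a : Fin p → ℝ) (ha : ∀ i, a i = 0 ∨ a i = 1) :
    (¬ ∃ μ : Fin m → ℝ, ∀ i : Fin p,
      (a i = 1 → SI.transpose.mulVec μ i ≤ -ε) ∧
      (a i = 0 → SI.transpose.mulVec μ i ≥ ε))
    ↔
    (∃ ℓ : Fin p → ℝ, ℓ ≠ 0 ∧ SI.mulVec ℓ = 0 ∧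
      (∀ i, a i = 1 → ℓ i ≥ 0) ∧ (∀ i, a i = 0 → ℓ i ≤ 0)) := by
  -- sign vector
  set s : Fin p → ℝ := fun i => if a i = 1 then -1 else 1 with hs
  -- rows of the rescaled system
  set r : Fin p → (Fin m → ℝ) := fun i j => s i * SI j i with hr
  have hST : ∀ (μ : Fin m → ℝ) (i : Fin p),
      SI.transpose.mulVec μ i = ∑ j, SI j i * μ j := by
    intro μ i
    simp [Matrix.mulVec, dotProduct, Matrix.transpose]
  have hdot : ∀ (μ : Fin m → ℝ) (i : Fin p),
      (∑ j, r i j * μ j) = s i * SI.transpose.mulVec μ i := by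
    intro μ i
    rw [hST, Finset.mul_sum]
    exact Finset.sum_congr rfl fun j _ => by ring
  -- feasibility reformulation
  have hfeas : (∃ μ : Fin m → ℝ, ∀ i : Fin p,
      (a i = 1 → SI.transpose.mulVec μ i ≤ -ε) ∧
      (a i = 0 → SI.transpose.mulVec μ i ≥ ε)) ↔
      (∃ μ : Fin m → ℝ, ∀ i : Fin p, ε ≤ ∑ j, r i j * μ j) := by
    constructor
    · rintro ⟨μ, hμ⟩
      refine ⟨μ, fun i => ?_⟩
      rw [hdot]
      rcases ha i with h0 | h1
      · have := (hμ i).2 h0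
        simp only [hs, h0, show (0:ℝ) ≠ 1 by norm_num, if_false]
        linarith
      · have := (hμ i).1 h1
        simp only [hs, h1, if_true]
        linarith
    · rintro ⟨μ, hμ⟩
      refine ⟨μ, fun i => ?_⟩
      have hi := hμ i
      rw [hdot] at hi
      rcases ha i with h0 | h1
      · simp only [hs, h0, show (0:ℝ) ≠ 1 by norm_num, if_false, one_mul] at hi
        exact ⟨fun h => absurd h (by rw [h0]; norm_num), fun _ => hi⟩
      · simp only [hs, h1, if_true, neg_one_mul] at hi
        exact ⟨fun _ => by linarith, fun h => absurd h1 (by rw [h]; norm_num)⟩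
  rw [hfeas]
  constructor
  · -- infeasible → sign-compatible cycle
    intro hinf
    have h0 : (0 : Fin m → ℝ) ∈ convexHull ℝ (Set.range r) := by
      by_contra hnot
      obtain ⟨f, u, hf0, hfb⟩ := geometric_hahn_banach_point_closed
        (convex_convexHull ℝ _)
        (((Set.finite_range r).isCompact_convexHull ℝ).isClosed) hnot
      rw [map_zero] at hf0
      set μ : Fin m → ℝ := fun j => f ((Pi.single j (1:ℝ) : Fin m → ℝ)) with hμ
      have hfx : ∀ x : Fin m → ℝ, f x = ∑ j, x j * μ j := by
        intro x
        have hx : x = ∑ j, x j • (Pi.single j (1:ℝ) : Fin m → ℝ) := by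
          ext k
          simp [Pi.single_apply]
        conv_lhs => rw [hx]
        rw [map_sum]
        exact Finset.sum_congr rfl fun j _ => by simp [hμ]
      have hru : ∀ i, u ≤ ∑ j, r i j * μ j := by
        intro i
        rw [← hfx]
        exact le_of_lt (hfb _ (subset_convexHull ℝ _ ⟨i, rfl⟩))
      refine hinf ⟨(ε / u) • μ, fun i => ?_⟩
      have h1 := hru i
      have h2 : (∑ j, r i j * ((ε / u) • μ) j) = (ε / u) * ∑ j, r i j * μ j := by
        rw [Finset.mul_sum]
        exact Finset.sum_congr rfl fun j _ => by simp; ring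
      rw [h2]
      have hεu : 0 < ε / u := div_pos hε hf0
      calc ε = (ε / u) * u := by field_simp
        _ ≤ (ε / u) * ∑ j, r i j * μ j := mul_le_mul_of_nonneg_left h1 (le_of_lt hεu)
    rw [convexHull_range_eq_exists_affineCombination] at h0
    obtain ⟨t, w, hw0, hw1, hw⟩ := h0
    rw [Finset.affineCombination_eq_linear_combination _ _ _ hw1] at hw
    set wf : Fin p → ℝ := fun i => if i ∈ t then w i else 0 with hwf
    have hwf0 : ∀ i, 0 ≤ wf i := fun i => by
      by_cases h : i ∈ t <;> simp [hwf, h, hw0 i]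
    have hwfsum : ∑ i, wf i = 1 := by
      rw [← hw1]
      refine (Finset.sum_subset (Finset.subset_univ t) ?_).symm.trans ?_
      · intro x _ hx; simp [hwf, hx]
      · exact Finset.sum_congr rfl fun i hi => by simp [hwf, hi]
    have hwfc : ∑ i, wf i • r i = 0 := by
      rw [← hw]
      refine (Finset.sum_subset (Finset.subset_univ t) ?_).symm.trans ?_
      · intro x _ hx; simp [hwf, hx]
      · exact Finset.sum_congr rfl fun i hi => by simp [hwf, hi]
    have hsabs : ∀ i, s i = -1 ∨ s i = 1 := by
      intro i
      rcases ha i with h | h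
      · right; simp [hs, h, show (0:ℝ) ≠ 1 by norm_num]
      · left; simp [hs, h]
    refine ⟨fun i => -(s i) * wf i, ?_, ?_, ?_, ?_⟩
    · intro hc
      have hz : ∀ i, wf i = 0 := by
        intro i
        have hci := congrFun hc i
        simp only [Pi.zero_apply] at hci
        rcases hsabs i with h | h <;> rw [h] at hci <;> linarith
      rw [Finset.sum_congr rfl (fun i _ => hz i)] at hwfsum
      simp at hwfsum
    · ext j
      have hj := congrFun hwfc j
      simp only [Finset.sum_apply, Pi.smul_apply, smul_eq_mul, Pi.zero_apply] at hj
      simp only [Matrix.mulVec, dotProduct, Pi.zero_apply]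
      rw [← neg_eq_zero, ← hj, ← Finset.sum_neg_distrib]
      refine Finset.sum_congr rfl fun i _ => ?_
      rcases hsabs i with h | h <;> simp [hr, h] <;> ring
    · intro i h1
      have h : s i = -1 := by simp [hs, h1]
      show -(s i) * wf i ≥ 0
      rw [h]; simpa using hwf0 i
    · intro i h0'
      have h : s i = 1 := by simp [hs, h0', show (0:ℝ) ≠ 1 by norm_num]
      show -(s i) * wf i ≤ 0
      rw [h]; simpa using hwf0 i
  · -- cycle → infeasible
    rintro ⟨ℓ, hℓne, hℓ0, hℓpos, hℓneg⟩ ⟨μ, hμ⟩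
    have key : (∑ i, ℓ i * SI.transpose.mulVec μ i) = 0 := by
      have hSv : ∀ j, SI.mulVec ℓ j = ∑ i, SI j i * ℓ i := by
        intro j; simp [Matrix.mulVec, dotProduct]
      calc (∑ i, ℓ i * SI.transpose.mulVec μ i)
          = ∑ i, ∑ j, ℓ i * (SI j i * μ j) := by
            exact Finset.sum_congr rfl fun i _ => by rw [hST, Finset.mul_sum]
        _ = ∑ j, (∑ i, SI j i * ℓ i) * μ j := by
            rw [Finset.sum_comm]
            refine Finset.sum_congr rfl fun j _ => ?_
            rw [Finset.sum_mul]
            exact Finset.sum_congr rfl fun i _ => by ring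
        _ = 0 := by
            simp only [← hSv, hℓ0, Pi.zero_apply, zero_mul, Finset.sum_const_zero]
    have hterm : ∀ i, ℓ i * SI.transpose.mulVec μ i ≤ -ε * |ℓ i| := by
      intro i
      have hi := hμ i
      rw [hdot] at hi
      rcases ha i with h0 | h1
      · simp only [hs, h0, show (0:ℝ) ≠ 1 by norm_num, if_false, one_mul] at hi
        have hl := hℓneg i h0
        rw [abs_of_nonpos hl]
        nlinarith
      · simp only [hs, h1, if_true, neg_one_mul] at hi
        have hl := hℓpos i h1
        rw [abs_of_nonneg hl]
        nlinarith
    have hsum : (0:ℝ) ≤ -ε * ∑ i, |ℓ i| := by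
      rw [Finset.mul_sum, ← key]
      exact Finset.sum_le_sum fun i _ => hterm i
    have habs : (0:ℝ) < ∑ i, |ℓ i| := by
      have hne : ∃ i, ℓ i ≠ 0 := by
        by_contra h
        push_neg at h
        exact hℓne (funext fun i => h i)
      obtain ⟨i, hi⟩ := hne
      calc (0:ℝ) < |ℓ i| := abs_pos.mpr hi
        _ ≤ ∑ i, |ℓ i| :=
          Finset.single_le_sum (f := fun i => |ℓ i|) (fun j _ => abs_nonneg _)
            (Finset.mem_univ i)
    nlinarith
end
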